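/- Let S, A be finite, γ ∈ (0,1), and let P and P̄ be transition kernels on S×A (each row a probability distribution on S). Suppose P̄ satisfies the anchor-state assumption: P̄(·|s,a) = Σ_{k∈K} λ_k^{s,a} P̄(·|s_k,a_k) with λ_k^{s,a} ≥ 0 and Σ_{k∈K} λ_k^{s,a} = 1, and suppose Σ_{s'} |P(s'|s,a) − P̄(s'|s,a)| ≤ ξ for every (s,a). Then for every V : S → [0, 1/(1−γ)] and every (s,a), Σ_{k∈K} λ_k^{s,a} √(Var_{s_k,a_k}(V)) ≤ √(Var_{s,a}(V)) + 2√(3ξ/(1−γ)²), where Var is taken with respect to the kernel P. -/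

import Mathlib

/-- A transition kernel: each row `P s a ·` is a probability distribution on `S`. -/
def IsKernel {S A : Type*} [Fintype S] (P : S → A → S → ℝ) : Prop :=
  (∀ s a s', 0 ≤ P s a s') ∧ ∀ s a, ∑ s', P s a s' = 1

/-- Variance of `V` under the distribution `p`. -/
noncomputable def VarDist {S : Type*} [Fintype S] (p : S → ℝ) (V : S → ℝ) : ℝ :=
  (∑ s', p s' * V s' ^ 2) - (∑ s', p s' * V s') ^ 2

lemma varDist_nonneg {S : Type*} [Fintype S] (p : S → ℝ) (V : S → ℝ)
    (hp : ∀ s, 0 ≤ p s) (h1 : ∑ s, p s = 1) : 0 ≤ VarDist p V := by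
  set m := ∑ t, p t * V t with hm
  have key : VarDist p V = ∑ s', p s' * (V s' - m) ^ 2 := by
    have h2 : ∀ s' ∈ Finset.univ, p s' * (V s' - m) ^ 2
        = p s' * V s' ^ 2 - 2 * m * (p s' * V s') + m ^ 2 * p s' := fun s' _ => by ring
    rw [Finset.sum_congr rfl h2]
    simp only [Finset.sum_add_distrib, Finset.sum_sub_distrib, ← Finset.mul_sum, h1]
    simp only [VarDist, ← hm]
    ring
  rw [key]
  exact Finset.sum_nonneg fun s' _ => mul_nonneg (hp s') (sq_nonneg _)

lemma sqrt_add_le' (a b : ℝ) (ha : 0 ≤ a) (hb : 0 ≤ b) :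
    Real.sqrt (a + b) ≤ Real.sqrt a + Real.sqrt b := by
  rw [show Real.sqrt a + Real.sqrt b = Real.sqrt ((Real.sqrt a + Real.sqrt b) ^ 2) from
    (Real.sqrt_sq (by positivity)).symm]
  apply Real.sqrt_le_sqrt
  nlinarith [Real.sq_sqrt ha, Real.sq_sqrt hb, Real.sqrt_nonneg a, Real.sqrt_nonneg b]

/-- Jensen / Cauchy–Schwarz: `(∑ λ m)^2 ≤ ∑ λ m^2` for weights summing to 1. -/
lemma cs_mean {K : Type*} [Fintype K] (lam m : K → ℝ)
    (hl : ∀ k, 0 ≤ lam k) (h1 : ∑ k, lam k = 1) :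
    (∑ k, lam k * m k) ^ 2 ≤ ∑ k, lam k * m k ^ 2 := by
  have hcs := Finset.sum_mul_sq_le_sq_mul_sq Finset.univ
    (fun k => Real.sqrt (lam k)) (fun k => Real.sqrt (lam k) * m k)
  have e1 : ∀ k ∈ Finset.univ, Real.sqrt (lam k) * (Real.sqrt (lam k) * m k)
      = lam k * m k := fun k _ => by rw [← mul_assoc, Real.mul_self_sqrt (hl k)]
  have e2 : ∀ k ∈ Finset.univ, Real.sqrt (lam k) ^ 2 = lam k := fun k _ =>
    Real.sq_sqrt (hl k)
  have e3 : ∀ k ∈ Finset.univ, (Real.sqrt (lam k) * m k) ^ 2 = lam k * m k ^ 2 :=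
    fun k _ => by rw [mul_pow, Real.sq_sqrt (hl k)]
  rw [Finset.sum_congr rfl e1, Finset.sum_congr rfl e2, Finset.sum_congr rfl e3, h1,
    one_mul] at hcs
  exact hcs

/-- Jensen for sqrt. -/
lemma jensen_sqrt {K : Type*} [Fintype K] (lam x : K → ℝ)
    (hl : ∀ k, 0 ≤ lam k) (h1 : ∑ k, lam k = 1) (hx : ∀ k, 0 ≤ x k) :
    ∑ k, lam k * Real.sqrt (x k) ≤ Real.sqrt (∑ k, lam k * x k) := by
  have hL : 0 ≤ ∑ k, lam k * Real.sqrt (x k) :=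
    Finset.sum_nonneg fun k _ => mul_nonneg (hl k) (Real.sqrt_nonneg _)
  rw [show (∑ k, lam k * Real.sqrt (x k)) = Real.sqrt ((∑ k, lam k * Real.sqrt (x k)) ^ 2) from
    (Real.sqrt_sq hL).symm]
  apply Real.sqrt_le_sqrt
  have := cs_mean lam (fun k => Real.sqrt (x k)) hl h1
  calc (∑ k, lam k * Real.sqrt (x k)) ^ 2 ≤ ∑ k, lam k * Real.sqrt (x k) ^ 2 := this
    _ = ∑ k, lam k * x k := by
        apply Finset.sum_congr rfl
        intro k _
        rw [Real.sq_sqrt (hx k)]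

/-- Variance perturbation bound. -/
lemma var_perturb {S : Type*} [Fintype S] (p q V : S → ℝ) (ξ M : ℝ) (hM : 0 ≤ M)
    (hV0 : ∀ s, 0 ≤ V s) (hVM : ∀ s, V s ≤ M)
    (hp : ∀ s, 0 ≤ p s) (hp1 : ∑ s, p s = 1)
    (hq : ∀ s, 0 ≤ q s) (hq1 : ∑ s, q s = 1)
    (hd : ∑ s, |p s - q s| ≤ ξ) :
    VarDist p V ≤ VarDist q V + 3 * ξ * M ^ 2 := by
  have hξ0 : 0 ≤ ξ :=
    le_trans (Finset.sum_nonneg fun s _ => abs_nonneg _) hd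
  set A := ∑ s, p s * V s with hA
  set B := ∑ s, q s * V s with hB
  have hA0 : 0 ≤ A := Finset.sum_nonneg fun s _ => mul_nonneg (hp s) (hV0 s)
  have hB0 : 0 ≤ B := Finset.sum_nonneg fun s _ => mul_nonneg (hq s) (hV0 s)
  have hAM : A ≤ M := by
    calc A ≤ ∑ s, p s * M := Finset.sum_le_sum fun s _ =>
            mul_le_mul_of_nonneg_left (hVM s) (hp s)
      _ = M := by rw [← Finset.sum_mul, hp1, one_mul]
  have hBM : B ≤ M := by
    calc B ≤ ∑ s, q s * M := Finset.sum_le_sum fun s _ =>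
            mul_le_mul_of_nonneg_left (hVM s) (hq s)
      _ = M := by rw [← Finset.sum_mul, hq1, one_mul]
  have hS1 : ∑ s, p s * V s ^ 2 - ∑ s, q s * V s ^ 2 ≤ ξ * M ^ 2 := by
    calc ∑ s, p s * V s ^ 2 - ∑ s, q s * V s ^ 2
        = ∑ s, (p s - q s) * V s ^ 2 := by
          rw [← Finset.sum_sub_distrib]
          exact Finset.sum_congr rfl fun s _ => by ring
      _ ≤ ∑ s, |p s - q s| * M ^ 2 := by
          apply Finset.sum_le_sum
          intro s _
          have h1 : (p s - q s) * V s ^ 2 ≤ |p s - q s| * V s ^ 2 :=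
            mul_le_mul_of_nonneg_right (le_abs_self _) (sq_nonneg _)
          have h2 : V s ^ 2 ≤ M ^ 2 := by nlinarith [hV0 s, hVM s]
          calc (p s - q s) * V s ^ 2 ≤ |p s - q s| * V s ^ 2 := h1
            _ ≤ |p s - q s| * M ^ 2 := mul_le_mul_of_nonneg_left h2 (abs_nonneg _)
      _ = (∑ s, |p s - q s|) * M ^ 2 := by rw [Finset.sum_mul]
      _ ≤ ξ * M ^ 2 := mul_le_mul_of_nonneg_right hd (sq_nonneg _)
  have hS2 : B - A ≤ ξ * M := by
    calc B - A = ∑ s, (q s - p s) * V s := by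
          rw [hA, hB, ← Finset.sum_sub_distrib]
          exact Finset.sum_congr rfl fun s _ => by ring
      _ ≤ ∑ s, |p s - q s| * M := by
          apply Finset.sum_le_sum
          intro s _
          have h1 : (q s - p s) * V s ≤ |q s - p s| * V s :=
            mul_le_mul_of_nonneg_right (le_abs_self _) (hV0 s)
          have h2 : |q s - p s| = |p s - q s| := abs_sub_comm _ _
          calc (q s - p s) * V s ≤ |q s - p s| * V s := h1
            _ = |p s - q s| * V s := by rw [h2]
            _ ≤ |p s - q s| * M := mul_le_mul_of_nonneg_left (hVM s) (abs_nonneg _)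
      _ = (∑ s, |p s - q s|) * M := by rw [Finset.sum_mul]
      _ ≤ ξ * M := mul_le_mul_of_nonneg_right hd hM
  simp only [VarDist, ← hA, ← hB]
  have h1 : 0 ≤ (ξ * M - (B - A)) * (B + A) :=
    mul_nonneg (sub_nonneg.mpr hS2) (add_nonneg hB0 hA0)
  have h2 : 0 ≤ ξ * M * (2 * M - (B + A)) :=
    mul_nonneg (mul_nonneg hξ0 hM) (by linarith)
  nlinarith [h1, h2]

theorem stmt12 {S A K : Type*} [Fintype S] [Fintype A] [Fintype K]
    (γ ξ : ℝ) (hγ0 : 0 < γ) (hγ1 : γ < 1)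
    (P Pbar : S → A → S → ℝ) (hP : IsKernel P) (hPbar : IsKernel Pbar)
    (anchor : K → S × A) (lam : S → A → K → ℝ)
    (hnn : ∀ s a k, 0 ≤ lam s a k) (hsum : ∀ s a, ∑ k, lam s a k = 1)
    (hrep : ∀ s a s', Pbar s a s' = ∑ k, lam s a k * Pbar (anchor k).1 (anchor k).2 s')
    (hξ : ∀ s a, ∑ s', |P s a s' - Pbar s a s'| ≤ ξ)
    (V : S → ℝ) (hV : ∀ s', V s' ∈ Set.Icc (0 : ℝ) (1 / (1 - γ)))
    (s : S) (a : A) :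
    ∑ k, lam s a k * Real.sqrt (VarDist (P (anchor k).1 (anchor k).2) V) ≤
      Real.sqrt (VarDist (P s a) V) + 2 * Real.sqrt (3 * ξ / (1 - γ) ^ 2) := by
  obtain ⟨hPnn, hP1⟩ := hP
  obtain ⟨hQnn, hQ1⟩ := hPbar
  set M : ℝ := 1 / (1 - γ) with hMdef
  have h1γ : 0 < 1 - γ := by linarith
  have hM : 0 ≤ M := by positivity
  have hV0 : ∀ s', 0 ≤ V s' := fun s' => (hV s').1
  have hVM : ∀ s', V s' ≤ M := fun s' => (hV s').2
  have hξ0 : 0 ≤ ξ :=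
    le_trans (Finset.sum_nonneg fun t _ => abs_nonneg _) (hξ s a)
  have hc : 3 * ξ / (1 - γ) ^ 2 = 3 * ξ * M ^ 2 := by
    rw [hMdef, div_pow, one_pow, mul_one_div]
  set c : ℝ := Real.sqrt (3 * ξ * M ^ 2) with hcdef
  have hc0 : 0 ≤ 3 * ξ * M ^ 2 := by positivity
  -- variance nonnegativity facts
  have hvarQ : ∀ k : K, 0 ≤ VarDist (Pbar (anchor k).1 (anchor k).2) V := fun k =>
    varDist_nonneg _ _ (hQnn _ _) (hQ1 _ _)
  have hvarQsa : 0 ≤ VarDist (Pbar s a) V := varDist_nonneg _ _ (hQnn _ _) (hQ1 _ _)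
  have hvarPsa : 0 ≤ VarDist (P s a) V := varDist_nonneg _ _ (hPnn _ _) (hP1 _ _)
  -- Step 1: each anchor sqrt-variance under P bounded by that under Pbar plus c
  have step1 : ∀ k : K, Real.sqrt (VarDist (P (anchor k).1 (anchor k).2) V) ≤
      Real.sqrt (VarDist (Pbar (anchor k).1 (anchor k).2) V) + c := by
    intro k
    have hpert := var_perturb (P (anchor k).1 (anchor k).2) (Pbar (anchor k).1 (anchor k).2)
      V ξ M hM hV0 hVM (hPnn _ _) (hP1 _ _) (hQnn _ _) (hQ1 _ _) (hξ _ _)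
    calc Real.sqrt (VarDist (P (anchor k).1 (anchor k).2) V)
        ≤ Real.sqrt (VarDist (Pbar (anchor k).1 (anchor k).2) V + 3 * ξ * M ^ 2) :=
          Real.sqrt_le_sqrt hpert
      _ ≤ Real.sqrt (VarDist (Pbar (anchor k).1 (anchor k).2) V) + c :=
          sqrt_add_le' _ _ (hvarQ k) hc0
  -- Step 2: Jensen
  have step2 : ∑ k, lam s a k * Real.sqrt (VarDist (Pbar (anchor k).1 (anchor k).2) V) ≤
      Real.sqrt (∑ k, lam s a k * VarDist (Pbar (anchor k).1 (anchor k).2) V) :=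
    jensen_sqrt _ _ (hnn s a) (hsum s a) hvarQ
  -- Step 3: mixture variance dominates average variance
  have step3 : ∑ k, lam s a k * VarDist (Pbar (anchor k).1 (anchor k).2) V ≤
      VarDist (Pbar s a) V := by
    have hmean : ∑ s', Pbar s a s' * V s'
        = ∑ k, lam s a k * ∑ s', Pbar (anchor k).1 (anchor k).2 s' * V s' := by
      calc ∑ s', Pbar s a s' * V s'
          = ∑ s', ∑ k, lam s a k * (Pbar (anchor k).1 (anchor k).2 s' * V s') := by
            apply Finset.sum_congr rfl
            intro s' _
            rw [hrep s a s', Finset.sum_mul]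
            exact Finset.sum_congr rfl fun k _ => by ring
        _ = ∑ k, ∑ s', lam s a k * (Pbar (anchor k).1 (anchor k).2 s' * V s') :=
            Finset.sum_comm
        _ = ∑ k, lam s a k * ∑ s', Pbar (anchor k).1 (anchor k).2 s' * V s' := by
            exact Finset.sum_congr rfl fun k _ => by rw [Finset.mul_sum]
    have hsq : ∑ s', Pbar s a s' * V s' ^ 2
        = ∑ k, lam s a k * ∑ s', Pbar (anchor k).1 (anchor k).2 s' * V s' ^ 2 := by
      calc ∑ s', Pbar s a s' * V s' ^ 2
          = ∑ s', ∑ k, lam s a k * (Pbar (anchor k).1 (anchor k).2 s' * V s' ^ 2) := by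
            apply Finset.sum_congr rfl
            intro s' _
            rw [hrep s a s', Finset.sum_mul]
            exact Finset.sum_congr rfl fun k _ => by ring
        _ = ∑ k, ∑ s', lam s a k * (Pbar (anchor k).1 (anchor k).2 s' * V s' ^ 2) :=
            Finset.sum_comm
        _ = ∑ k, lam s a k * ∑ s', Pbar (anchor k).1 (anchor k).2 s' * V s' ^ 2 := by
            exact Finset.sum_congr rfl fun k _ => by rw [Finset.mul_sum]
    have hcs := cs_mean (lam s a)
      (fun k => ∑ s', Pbar (anchor k).1 (anchor k).2 s' * V s') (hnn s a) (hsum s a)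
    simp only [VarDist]
    have lhs_eq : ∑ k, lam s a k * ((∑ s', Pbar (anchor k).1 (anchor k).2 s' * V s' ^ 2)
          - (∑ s', Pbar (anchor k).1 (anchor k).2 s' * V s') ^ 2)
        = (∑ k, lam s a k * ∑ s', Pbar (anchor k).1 (anchor k).2 s' * V s' ^ 2)
          - ∑ k, lam s a k * (∑ s', Pbar (anchor k).1 (anchor k).2 s' * V s') ^ 2 := by
      rw [← Finset.sum_sub_distrib]
      exact Finset.sum_congr rfl fun k _ => by ring
    rw [lhs_eq, hmean, hsq]
    linarith [hcs]
  -- Step 4: compare Pbar s a to P s a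
  have step4 : Real.sqrt (VarDist (Pbar s a) V) ≤ Real.sqrt (VarDist (P s a) V) + c := by
    have hpert := var_perturb (Pbar s a) (P s a) V ξ M hM hV0 hVM
      (hQnn _ _) (hQ1 _ _) (hPnn _ _) (hP1 _ _)
      (by simpa [abs_sub_comm] using hξ s a)
    calc Real.sqrt (VarDist (Pbar s a) V)
        ≤ Real.sqrt (VarDist (P s a) V + 3 * ξ * M ^ 2) := Real.sqrt_le_sqrt hpert
      _ ≤ Real.sqrt (VarDist (P s a) V) + c := sqrt_add_le' _ _ hvarPsa hc0
  -- Assemble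
  have chain : ∑ k, lam s a k * Real.sqrt (VarDist (P (anchor k).1 (anchor k).2) V)
      ≤ Real.sqrt (VarDist (Pbar s a) V) + c := by
    calc ∑ k, lam s a k * Real.sqrt (VarDist (P (anchor k).1 (anchor k).2) V)
        ≤ ∑ k, lam s a k * (Real.sqrt (VarDist (Pbar (anchor k).1 (anchor k).2) V) + c) :=
          Finset.sum_le_sum fun k _ =>
            mul_le_mul_of_nonneg_left (step1 k) (hnn s a k)
      _ = (∑ k, lam s a k * Real.sqrt (VarDist (Pbar (anchor k).1 (anchor k).2) V)) + c := by
          simp only [mul_add, Finset.sum_add_distrib, ← Finset.sum_mul, hsum s a, one_mul]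
      _ ≤ Real.sqrt (∑ k, lam s a k * VarDist (Pbar (anchor k).1 (anchor k).2) V) + c := by
          linarith [step2]
      _ ≤ Real.sqrt (VarDist (Pbar s a) V) + c := by
          linarith [Real.sqrt_le_sqrt step3]
  rw [hc]
  calc ∑ k, lam s a k * Real.sqrt (VarDist (P (anchor k).1 (anchor k).2) V)
      ≤ Real.sqrt (VarDist (Pbar s a) V) + c := chain
    _ ≤ Real.sqrt (VarDist (P s a) V) + c + c := by linarith [step4]
    _ = Real.sqrt (VarDist (P s a) V) + 2 * Real.sqrt (3 * ξ * M ^ 2) := by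
        rw [hcdef]; ring
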